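/- Let T be a finite simple graph and ℓ ≥ 0 an even integer, and let T^g denote the gadget subdivision of T with parameter ℓ. Then the stability number of T^g satisfies α(T^g) = α(T) + (ℓ+1)·|E(T)|. -/

import Mathlib

attribute [local instance] Classical.propDecidable

open Matrix Filter

noncomputable section

/-- The nonnegative rank of a real matrix: the least `r` such that `M = T * U`
with `T`, `U` entrywise nonnegative. -/
def nnegRank {m n : Type*} (M : Matrix m n ℝ) : ℕ :=
  sInf { r : ℕ | ∃ (T : Matrix m (Fin r) ℝ) (U : Matrix (Fin r) n ℝ),
    (∀ i j, 0 ≤ T i j) ∧ (∀ i j, 0 ≤ U i j) ∧ M = T * U }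

/-- An LP formulation of size `r` of the maximization problem with feasible solutions `S`,
objective functions indexed by `F` (given by `obj`), and approximation guarantees `guar`:
a system of `r` linear inequalities and `k` linear equations in `ℝ^d`, realizations `x s` of
feasible solutions (satisfying the system), realizations `w f` of objective functions
(`⟪w f, x s⟫ = obj f s`), such that the LP value is at most the guarantee. -/
def IsLPFormulation {S F : Type*} (obj : F → S → ℝ) (guar : F → ℝ) (r : ℕ) : Prop :=
  ∃ (d k : ℕ) (Ai : Matrix (Fin r) (Fin d) ℝ) (bi : Fin r → ℝ)
    (Ae : Matrix (Fin k) (Fin d) ℝ) (be : Fin k → ℝ)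
    (x : S → Fin d → ℝ) (w : F → Fin d → ℝ),
    (∀ s, (∀ i, Ai.mulVec (x s) i ≤ bi i) ∧ Ae.mulVec (x s) = be) ∧
    (∀ f s, w f ⬝ᵥ x s = obj f s) ∧
    (∀ f (y : Fin d → ℝ), (∀ i, Ai.mulVec y i ≤ bi i) → Ae.mulVec y = be →
      w f ⬝ᵥ y ≤ guar f)

/-- Formulation complexity: minimum size of an LP formulation. -/
def xcLP {S F : Type*} (obj : F → S → ℝ) (guar : F → ℝ) : ℕ :=
  sInf { r | IsLPFormulation obj guar r }

/-- A stable (independent) set in a graph. -/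
def IsStableSet {V : Type*} (G : SimpleGraph V) (s : Finset V) : Prop :=
  ∀ u ∈ s, ∀ v ∈ s, ¬ G.Adj u v

/-- The stability number of a graph. -/
def stabNum {V : Type*} [Fintype V] (G : SimpleGraph V) : ℕ :=
  sSup { k | ∃ s : Finset V, IsStableSet G s ∧ s.card = k }

/-- The formulation complexity of the maximum stable set problem `STAB(G)`:
feasible solutions are the stable sets of `G`, objective functions are
`f_a(S) = |S ∩ a|` for `a ⊆ V(G)`, guarantees are `α(G[a])`. -/
def xcSTAB {V : Type*} [Fintype V] (G : SimpleGraph V) : ℕ :=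
  xcLP (fun (a : Finset V) (s : {s : Finset V // IsStableSet G s}) => ((s.val ∩ a).card : ℝ))
       (fun a : Finset V => (stabNum (G.induce (↑a : Set V)) : ℝ))

/-- Probability of an event under the Erdős–Rényi distribution `G(n,p)`. -/
def erProb (n : ℕ) (p : ℝ) (E : SimpleGraph (Fin n) → Prop) : ℝ :=
  ∑ G : SimpleGraph (Fin n),
    if E G then p ^ Nat.card G.edgeSet * (1 - p) ^ (n.choose 2 - Nat.card G.edgeSet) else 0

/-- The smaller endpoint of an unordered pair. -/
def sym2Min {α : Type*} [LinearOrder α] (e : Sym2 α) : α :=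
  Sym2.lift ⟨fun a b => min a b, fun a b => min_comm a b⟩ e

/-- The larger endpoint of an unordered pair. -/
def sym2Max {α : Type*} [LinearOrder α] (e : Sym2 α) : α :=
  Sym2.lift ⟨fun a b => max a b, fun a b => max_comm a b⟩ e

/-- Adjacency of the gadget subdivision `T^g` with parameter `ℓ`: every edge `ij` of `T`
is replaced by a path with `2ℓ+3` edges between `i` and `j`, whose `2ℓ+2` internal vertices
are new and pairwise distinct across edges. -/
def gadgetAdj {α : Type*} [LinearOrder α] (T : SimpleGraph α) (ℓ : ℕ) :
    (α ⊕ (↥T.edgeSet × Fin (2*ℓ+2))) → (α ⊕ (↥T.edgeSet × Fin (2*ℓ+2))) → Prop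
  | Sum.inl _, Sum.inl _ => False
  | Sum.inl u, Sum.inr ek =>
      (ek.2.val = 0 ∧ u = sym2Min ek.1.val) ∨ (ek.2.val = 2*ℓ+1 ∧ u = sym2Max ek.1.val)
  | Sum.inr ek, Sum.inl u =>
      (ek.2.val = 0 ∧ u = sym2Min ek.1.val) ∨ (ek.2.val = 2*ℓ+1 ∧ u = sym2Max ek.1.val)
  | Sum.inr ek, Sum.inr ek' =>
      ek.1 = ek'.1 ∧ (ek.2.val + 1 = ek'.2.val ∨ ek'.2.val + 1 = ek.2.val)

/-- The gadget subdivision `T^g` of a graph `T` with parameter `ℓ`. -/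
def gadget {α : Type*} [LinearOrder α] (T : SimpleGraph α) (ℓ : ℕ) :
    SimpleGraph (α ⊕ (↥T.edgeSet × Fin (2*ℓ+2))) where
  Adj := gadgetAdj T ℓ
  symm := by
    refine ⟨?_⟩
    rintro (u | ek) (v | ek') h
    · exact h.elim
    · exact h
    · exact h
    · exact ⟨h.1.symm, h.2.symm⟩
  loopless := by
    refine ⟨?_⟩
    rintro (u | ek) h
    · exact h.elim
    · exact h.2.elim (fun h' => by omega) (fun h' => by omega)

/-- A simple graph with vertex set contained in `[n] = {1, …, n}` (modelled as `Fin n`):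
a pair of a simple graph on `Fin n` and its vertex set, containing all endpoints of edges. -/
def GraphOn (n : ℕ) : Type :=
  { GV : SimpleGraph (Fin n) × Finset (Fin n) //
      ∀ u v, GV.1.Adj u v → u ∈ GV.2 ∧ v ∈ GV.2 }

instance (n : ℕ) : Fintype (GraphOn n) :=
  Subtype.fintype _

/-- The stability number of a graph with vertex set `⊆ [n]`:
stable sets must consist of vertices of the graph. -/
def alphaOn {n : ℕ} (G : GraphOn n) : ℕ :=
  sSup { k | ∃ s : Finset (Fin n), s ⊆ G.val.2 ∧ IsStableSet G.val.1 s ∧ s.card = k }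

/-- Probability of an event for a random family of graphs, where each graph with vertex
set `⊆ [n]` is included in the family independently with probability `p`. -/
def famProb (n : ℕ) (p : ℝ) (E : Finset (GraphOn n) → Prop) : ℝ :=
  ∑ 𝒢 : Finset (GraphOn n),
    if E 𝒢 then p ^ 𝒢.card * (1 - p) ^ (Fintype.card (GraphOn n) - 𝒢.card) else 0

noncomputable section

lemma sym2Min_mk {α : Type*} [LinearOrder α] (a b : α) : sym2Min s(a,b) = min a b := rfl
lemma sym2Max_mk {α : Type*} [LinearOrder α] (a b : α) : sym2Max s(a,b) = max a b := rfl

lemma adj_min_max {α : Type*} [LinearOrder α] {T : SimpleGraph α} {e : Sym2 α}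
    (he : e ∈ T.edgeSet) : T.Adj (sym2Min e) (sym2Max e) := by
  induction e using Sym2.ind with
  | _ a b =>
    simp only [SimpleGraph.mem_edgeSet] at he
    rcases le_total a b with h | h
    · simpa [sym2Min_mk, sym2Max_mk, min_eq_left h, max_eq_right h] using he
    · simpa [sym2Min_mk, sym2Max_mk, min_eq_right h, max_eq_left h] using he.symm

lemma path_card_le {n : ℕ} (s : Finset (Fin (2*n+2)))
    (h : ∀ i ∈ s, ∀ j ∈ s, (i:ℕ)+1 ≠ (j:ℕ)) : s.card ≤ n+1 := by
  have : s.card ≤ (Finset.range (n+1)).card := by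
    refine Finset.card_le_card_of_injOn (fun i => (i:ℕ)/2) ?_ ?_
    · intro i _
      have := i.isLt
      simp only [Finset.mem_coe, Finset.mem_range]; omega
    · intro i hi j hj hij
      have h1 := h i hi j hj
      have h2 := h j hj i hi
      have hij' : (i:ℕ)/2 = (j:ℕ)/2 := hij
      exact Fin.ext (by omega)
  simpa using this

lemma path_card_le' {n : ℕ} (s : Finset (Fin (2*n+2)))
    (h : ∀ i ∈ s, ∀ j ∈ s, (i:ℕ)+1 ≠ (j:ℕ))
    (h0 : ∀ i ∈ s, (i:ℕ) ≠ 0) (h1 : ∀ i ∈ s, (i:ℕ) ≠ 2*n+1) : s.card ≤ n := by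
  have : s.card ≤ (Finset.range n).card := by
    refine Finset.card_le_card_of_injOn (fun i => ((i:ℕ)-1)/2) ?_ ?_
    · intro i hi
      have := i.isLt
      have := h0 i hi; have := h1 i hi
      simp only [Finset.mem_coe, Finset.mem_range]; omega
    · intro i hi j hj hij
      have ha := h i hi j hj
      have hb := h j hj i hi
      have := h0 i hi; have := h0 j hj
      have hij' : ((i:ℕ)-1)/2 = ((j:ℕ)-1)/2 := hij
      exact Fin.ext (by omega)
  simpa using this

lemma le_stabNum {V : Type*} [Fintype V] (G : SimpleGraph V) (s : Finset V)
    (hs : IsStableSet G s) : s.card ≤ stabNum G := by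
  apply le_csSup
  · refine ⟨Fintype.card V, ?_⟩
    rintro k ⟨t, -, rfl⟩
    simpa using t.card_le_univ
  · exact ⟨s, hs, rfl⟩

lemma stabNum_le {V : Type*} [Fintype V] (G : SimpleGraph V) (m : ℕ)
    (h : ∀ s : Finset V, IsStableSet G s → s.card ≤ m) : stabNum G ≤ m := by
  have hne : Set.Nonempty { k | ∃ s : Finset V, IsStableSet G s ∧ s.card = k } :=
    ⟨0, ∅, by intro u hu; simp at hu, rfl⟩
  apply csSup_le hne
  rintro k ⟨s, hs, rfl⟩; exact h s hs

lemma exists_stab {V : Type*} [Fintype V] (G : SimpleGraph V) :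
    ∃ s : Finset V, IsStableSet G s ∧ s.card = stabNum G := by
  have h : stabNum G ∈ {k | ∃ s : Finset V, IsStableSet G s ∧ s.card = k} := by
    apply Nat.sSup_mem
    · exact ⟨0, ∅, by intro u hu; simp at hu, rfl⟩
    · exact ⟨Fintype.card V, by rintro k ⟨t, -, rfl⟩; simpa using t.card_le_univ⟩
  exact h

def badSet {α : Type*} [Fintype α] [LinearOrder α] (T : SimpleGraph α) (A : Finset α) :
    Finset ↥T.edgeSet :=
  Finset.univ.filter (fun e => sym2Min e.val ∈ A ∧ sym2Max e.val ∈ A)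

lemma exists_stable_sub {α : Type*} [Fintype α] [LinearOrder α] (T : SimpleGraph α)
    (A : Finset α) :
    ∃ B : Finset α, IsStableSet T B ∧ A.card ≤ B.card + (badSet T A).card := by
  induction A using Finset.strongInduction with
  | _ A ih =>
    by_cases hA : IsStableSet T A
    · exact ⟨A, hA, Nat.le_add_right _ _⟩
    · simp only [IsStableSet, not_forall] at hA
      obtain ⟨u, hu, v, hv, huv⟩ := hA
      rw [not_not] at huv
      obtain ⟨B, hB, hcard⟩ := ih (A.erase u) (Finset.erase_ssubset hu)
      refine ⟨B, hB, ?_⟩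
      have he : s(u,v) ∈ T.edgeSet := huv
      have hmemB : (⟨s(u,v), he⟩ : ↥T.edgeSet) ∈ badSet T A := by
        simp only [badSet, Finset.mem_filter, Finset.mem_univ, true_and, sym2Min_mk, sym2Max_mk]
        rcases le_total u v with h | h
        · rw [min_eq_left h, max_eq_right h]; exact ⟨hu, hv⟩
        · rw [min_eq_right h, max_eq_left h]; exact ⟨hv, hu⟩
      have hsub : badSet T (A.erase u) ⊆ (badSet T A).erase ⟨s(u,v), he⟩ := by
        intro e hemem
        simp only [badSet, Finset.mem_filter, Finset.mem_univ, true_and] at hemem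
        rw [Finset.mem_erase]
        refine ⟨?_, ?_⟩
        · intro heq
          have h1 := hemem.1
          have h2 := hemem.2
          rw [heq] at h1 h2
          simp only [sym2Min_mk, sym2Max_mk] at h1 h2
          rcases le_total u v with h | h
          · rw [min_eq_left h] at h1
            exact (Finset.ne_of_mem_erase h1) rfl
          · rw [max_eq_left h] at h2
            exact (Finset.ne_of_mem_erase h2) rfl
        · simp only [badSet, Finset.mem_filter, Finset.mem_univ, true_and]
          exact ⟨Finset.mem_of_mem_erase hemem.1, Finset.mem_of_mem_erase hemem.2⟩
      have hc1 : (badSet T (A.erase u)).card ≤ (badSet T A).card - 1 := by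
        calc (badSet T (A.erase u)).card ≤ ((badSet T A).erase ⟨s(u,v), he⟩).card :=
              Finset.card_le_card hsub
          _ = (badSet T A).card - 1 := Finset.card_erase_of_mem hmemB
      have hc2 : (A.erase u).card = A.card - 1 := Finset.card_erase_of_mem hu
      have hc3 : 1 ≤ (badSet T A).card := Finset.card_pos.mpr ⟨_, hmemB⟩ 
      have hc4 : 1 ≤ A.card := Finset.card_pos.mpr ⟨_, hu⟩
      omega

end

end
/-- For a finite graph `T` and an even `ℓ ≥ 0`, the stability number of
the gadget subdivision `T^g` equals `α(T) + (ℓ+1)·|E(T)|`. -/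
theorem stabNum_gadget {α : Type*} [Fintype α] [LinearOrder α]
    (T : SimpleGraph α) (ℓ : ℕ) (hℓ : Even ℓ) :
    stabNum (gadget T ℓ) = stabNum T + (ℓ + 1) * Nat.card T.edgeSet := by
  classical
  have hcard : Nat.card ↥T.edgeSet = Fintype.card ↥T.edgeSet := Nat.card_eq_fintype_card
  apply le_antisymm
  · -- upper bound
    apply stabNum_le
    intro S' hS'
    set A := S'.toLeft with hA
    set R := S'.toRight with hR
    have hsplit : A.card + R.card = S'.card := Finset.card_toLeft_add_card_toRight
    have hfib : R.card = ∑ e : ↥T.edgeSet, (R.filter (fun p => p.1 = e)).card :=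
      Finset.card_eq_sum_card_fiberwise (fun p _ => Finset.mem_univ p.1)
    set Be : ↥T.edgeSet → Finset (Fin (2*ℓ+2)) :=
      fun e => (R.filter (fun p => p.1 = e)).image Prod.snd with hBe
    have hBecard : ∀ e, (R.filter (fun p => p.1 = e)).card = (Be e).card := by
      intro e
      rw [hBe]
      refine (Finset.card_image_of_injOn ?_).symm
      intro p hp q hq hpq
      simp only [Finset.mem_coe, Finset.mem_filter] at hp hq
      exact Prod.ext (hp.2.trans hq.2.symm) hpq
    have hBemem : ∀ e k, k ∈ Be e ↔ Sum.inr (e, k) ∈ S' := by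
      intro e k
      simp only [hBe, Finset.mem_image, Finset.mem_filter, hR, Finset.mem_toRight]
      constructor
      · rintro ⟨⟨e', k'⟩, ⟨hm, he'⟩, hk⟩
        cases he'; cases hk; exact hm
      · intro hm
        exact ⟨(e, k), ⟨hm, rfl⟩, rfl⟩
    have hcons : ∀ e, ∀ i ∈ Be e, ∀ j ∈ Be e, (i:ℕ)+1 ≠ (j:ℕ) := by
      intro e i hi j hj hij
      have h1 := (hBemem e i).1 hi
      have h2 := (hBemem e j).1 hj
      exact hS' _ h1 _ h2 ⟨rfl, Or.inl hij⟩
    have hbound : ∀ e : ↥T.edgeSet,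
        (Be e).card + (if e ∈ badSet T A then 1 else 0) ≤ ℓ + 1 := by
      intro e
      by_cases hb : e ∈ badSet T A
      · rw [if_pos hb]
        have hbb := hb
        simp only [badSet, Finset.mem_filter, Finset.mem_univ, true_and] at hbb
        have hle : (Be e).card ≤ ℓ := by
          apply path_card_le' _ (hcons e)
          · intro i hi h0
            have h1 := (hBemem e i).1 hi
            have hmin : Sum.inl (sym2Min e.val) ∈ S' := Finset.mem_toLeft.mp hbb.1
            exact hS' _ hmin _ h1 (Or.inl ⟨h0, rfl⟩)
          · intro i hi h1'
            have h1 := (hBemem e i).1 hi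
            have hmax : Sum.inl (sym2Max e.val) ∈ S' := Finset.mem_toLeft.mp hbb.2
            exact hS' _ hmax _ h1 (Or.inr ⟨h1', rfl⟩)
        omega
      · rw [if_neg hb]
        have := path_card_le _ (hcons e)
        omega
    have hRsum : R.card = ∑ e : ↥T.edgeSet, (Be e).card := by
      rw [hfib]; exact Finset.sum_congr rfl (fun e _ => hBecard e)
    have hbadsum : (badSet T A).card
        = ∑ e : ↥T.edgeSet, (if e ∈ badSet T A then 1 else 0) := by
      rw [Finset.sum_ite_mem, Finset.univ_inter, Finset.card_eq_sum_ones]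
    have hsum : R.card + (badSet T A).card ≤ (ℓ+1) * Fintype.card ↥T.edgeSet := by
      rw [hRsum, hbadsum, ← Finset.sum_add_distrib]
      calc ∑ e : ↥T.edgeSet, ((Be e).card + (if e ∈ badSet T A then 1 else 0))
          ≤ ∑ _e : ↥T.edgeSet, (ℓ+1) := Finset.sum_le_sum (fun e _ => hbound e)
        _ = Fintype.card ↥T.edgeSet * (ℓ+1) := by
            rw [Finset.sum_const, Finset.card_univ, smul_eq_mul]
        _ = (ℓ+1) * Fintype.card ↥T.edgeSet := mul_comm _ _
    obtain ⟨B, hB, hABcard⟩ := exists_stable_sub T A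
    have hBle : B.card ≤ stabNum T := le_stabNum T B hB
    rw [hcard]
    omega
  · -- lower bound
    obtain ⟨S, hS, hScard⟩ := exists_stab T
    have key : ∀ e : ↥T.edgeSet, ¬(sym2Min e.val ∈ S ∧ sym2Max e.val ∈ S) := by
      rintro e ⟨h1, h2⟩
      exact hS _ h1 _ h2 (adj_min_max e.2)
    set c : ↥T.edgeSet → ℕ := fun e => if sym2Min e.val ∈ S then 1 else 0 with hc
    have hc1 : ∀ e, c e ≤ 1 := fun e => by simp only [hc]; split <;> omega
    have hc0 : ∀ e, sym2Min e.val ∉ S → c e = 0 := fun e h => by simp only [hc, if_neg h]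
    have hcS : ∀ e, sym2Min e.val ∈ S → c e = 1 := fun e h => by simp only [hc, if_pos h]
    set F : ↥T.edgeSet × Fin (ℓ+1) → (α ⊕ (↥T.edgeSet × Fin (2*ℓ+2))) :=
      fun p => Sum.inr (p.1, ⟨2*p.2.val + c p.1, by have := p.2.isLt; have := hc1 p.1; omega⟩)
      with hF
    set S' : Finset (α ⊕ (↥T.edgeSet × Fin (2*ℓ+2))) :=
      S.image Sum.inl ∪ Finset.univ.image F with hS'def
    have hstable : IsStableSet (gadget T ℓ) S' := by
      intro x hx y hy hadj
      simp only [hS'def, Finset.mem_union, Finset.mem_image, Finset.mem_univ, true_and]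
        at hx hy
      rcases hx with ⟨u, hu, rfl⟩ | ⟨p, rfl⟩ <;> rcases hy with ⟨v, hv, rfl⟩ | ⟨q, rfl⟩
      · exact hadj
      · simp only [hF] at hadj
        rcases hadj with ⟨h0, hu'⟩ | ⟨h1, hu'⟩
        · have h0' : 2*q.2.val + c q.1 = 0 := h0
          have hmin : sym2Min q.1.val ∉ S := by
            intro hmem
            rw [hcS q.1 hmem] at h0'
            omega
          exact hmin (hu' ▸ hu)
        · have h1' : 2*q.2.val + c q.1 = 2*ℓ+1 := h1
          have hcq := hc1 q.1
          have hmin : sym2Min q.1.val ∈ S := by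
            by_contra hmem
            rw [hc0 q.1 hmem] at h1'
            omega
          exact key q.1 ⟨hmin, hu' ▸ hu⟩
      · simp only [hF] at hadj
        rcases hadj with ⟨h0, hu'⟩ | ⟨h1, hu'⟩
        · have h0' : 2*p.2.val + c p.1 = 0 := h0
          have hmin : sym2Min p.1.val ∉ S := by
            intro hmem
            rw [hcS p.1 hmem] at h0'
            omega
          exact hmin (hu' ▸ hv)
        · have h1' : 2*p.2.val + c p.1 = 2*ℓ+1 := h1
          have hcq := hc1 p.1
          have hmin : sym2Min p.1.val ∈ S := by
            by_contra hmem
            rw [hc0 p.1 hmem] at h1'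
            omega
          exact key p.1 ⟨hmin, hu' ▸ hv⟩
      · simp only [hF] at hadj
        obtain ⟨heq, hor⟩ := hadj
        have h' : 2*p.2.val + c p.1 + 1 = 2*q.2.val + c q.1 ∨
            2*q.2.val + c q.1 + 1 = 2*p.2.val + c p.1 := hor
        have hceq : c p.1 = c q.1 := by rw [heq]
        omega
    have hFinj : Function.Injective F := by
      rintro ⟨e, a⟩ ⟨e', b⟩ hpq
      simp only [hF, Sum.inr.injEq, Prod.mk.injEq, Fin.mk.injEq] at hpq
      obtain ⟨h1, h2⟩ := hpq
      subst h1
      have : a = b := Fin.ext (by omega)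
      rw [this]
    have hdisj : Disjoint (S.image Sum.inl) (Finset.univ.image F) := by
      simp only [Finset.disjoint_left, Finset.mem_image, Finset.mem_univ, true_and]
      rintro x ⟨u, hu, rfl⟩ ⟨p, hp⟩
      simp only [hF] at hp
      exact absurd hp (by simp)
    have hcard1 : (S.image (Sum.inl : α → α ⊕ (↥T.edgeSet × Fin (2*ℓ+2)))).card
        = stabNum T := by
      rw [Finset.card_image_of_injective _ Sum.inl_injective, hScard]
    have hcard2 : (Finset.univ.image F).card = Fintype.card ↥T.edgeSet * (ℓ+1) := by
      rw [Finset.card_image_of_injective _ hFinj, Finset.card_univ, Fintype.card_prod,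
        Fintype.card_fin]
    have hle := le_stabNum (gadget T ℓ) S' hstable
    have hucard := Finset.card_union_of_disjoint hdisj
    rw [hS'def] at hle
    rw [hucard, hcard1, hcard2] at hle
    rw [hcard, mul_comm]
    exact hle
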